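/- arXiv:1206.2963 — 7 statements merged into one kernel-verified Lean document; each statement's English description precedes it below -/
import Mathlib

section
/- Let X be a complete real inner product space, let F : X → X be an affine isometry (F x = U x + v with U a surjective linear isometry and v ∈ X), and let C ⊆ X be a nonempty closed convex subset with F '' C = C. Then inf { ‖F x − x‖ : x ∈ C } = min(F), and a point x ∈ C satisfies ‖F x − x‖ = inf { ‖F y − y‖ : y ∈ C } if and only if x ∈ Min(F); in other words Min(F|_C) = Min(F) ∩ C. In particular, if the infimum over C is attained at some point of C, then Min(F) ≠ ∅. -/
/-- Let `F x = U x + v` be an affine isometry of a complete real inner product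
space `X` (`U` a surjective linear isometry) and let `C` be a nonempty closed
convex `F`-invariant subset.  Then the infimum of the displacement over `C`
equals `min F`, a point of `C` minimizes the displacement over `C` iff it lies
in `Min F` (so `Min (F|_C) = Min F ∩ C`), and if the infimum over `C` is
attained then `Min F` is nonempty. -/
theorem minSet_inter_invariant_convex
    {X : Type*} [NormedAddCommGroup X] [InnerProductSpace ℝ X] [CompleteSpace X]
    (U : X →ₗᵢ[ℝ] X) (hU : Function.Surjective U) (v : X)
    (C : Set X) (hne : C.Nonempty) (hcl : IsClosed C) (hconv : Convex ℝ C)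
    (hFC : (fun x => U x + v) '' C = C) :
    (⨅ x : C, ‖(U x + v) - (x : X)‖) = (⨅ x : X, ‖(U x + v) - x‖) ∧
    (∀ x ∈ C, (‖(U x + v) - x‖ = ⨅ y : C, ‖(U y + v) - (y : X)‖ ↔
        ‖(U x + v) - x‖ = ⨅ y : X, ‖(U y + v) - y‖)) ∧
    ((∃ x ∈ C, ‖(U x + v) - x‖ = ⨅ y : C, ‖(U y + v) - (y : X)‖) →
      {x : X | ‖(U x + v) - x‖ = ⨅ y : X, ‖(U y + v) - y‖}.Nonempty) := by
  set F : X → X := fun x => U x + v with hF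
  set f : X → ℝ := fun x => ‖F x - x‖ with hf
  -- F is an isometry
  have hiso : ∀ a b : X, ‖F a - F b‖ = ‖a - b‖ := by
    intro a b
    have : F a - F b = U (a - b) := by simp only [hF, map_sub]; abel
    rw [this, U.norm_map]
  have hisoN : ∀ (n : ℕ) (a b : X), ‖F^[n] a - F^[n] b‖ = ‖a - b‖ := by
    intro n
    induction n with
    | zero => simp
    | succ n ih =>
      intro a b
      rw [Function.iterate_succ_apply', Function.iterate_succ_apply', hiso, ih]
  -- displacement is invariant under F
  have hfF : ∀ z : X, f (F z) = f z := by
    intro z; simp only [hf]; rw [show F (F z) - F z = F (F z) - F z from rfl, hiso]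
  have hfFk : ∀ (k : ℕ) (z : X), f (F^[k] z) = f z := by
    intro k
    induction k with
    | zero => simp
    | succ k ih => intro z; rw [Function.iterate_succ_apply, ih, hfF]
  -- displacement of iterates
  have hdisp : ∀ (n : ℕ) (y : X), ‖F^[n] y - y‖ ≤ n * f y := by
    intro n y
    induction n with
    | zero => simp
    | succ n ih =>
      have h1 : ‖F^[n+1] y - y‖ ≤ ‖F^[n+1] y - F^[n] y‖ + ‖F^[n] y - y‖ :=
        norm_sub_le_norm_sub_add_norm_sub _ _ _
      have h2 : ‖F^[n+1] y - F^[n] y‖ = f y := by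
        rw [Function.iterate_succ_apply']
        have := hfFk n y
        simpa [hf] using this
      push_cast
      nlinarith [norm_nonneg (F y - y)]
  -- F maps C into C
  have hFmem : ∀ x ∈ C, F x ∈ C := by
    intro x hx
    have : F x ∈ (fun x => U x + v) '' C := ⟨x, hx, rfl⟩
    rwa [hFC] at this
  have hFkmem : ∀ (k : ℕ), ∀ x ∈ C, F^[k] x ∈ C := by
    intro k
    induction k with
    | zero => simp
    | succ k ih =>
      intro x hx
      rw [Function.iterate_succ_apply]
      exact ih _ (hFmem x hx)
  obtain ⟨x₀, hx₀⟩ := hne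
  -- bddBelow facts
  have hbdd : BddBelow (Set.range fun x : X => f x) :=
    ⟨0, by rintro r ⟨x, rfl⟩; exact norm_nonneg _⟩
  have hbddC : BddBelow (Set.range fun x : C => f x) :=
    ⟨0, by rintro r ⟨x, rfl⟩; exact norm_nonneg _⟩
  have hnC : Nonempty C := ⟨⟨x₀, hx₀⟩⟩
  -- the key equality of infima
  have key : (⨅ x : C, f x) = ⨅ x : X, f x := by
    apply le_antisymm
    · -- inf over C ≤ inf over X : via averaging
      apply le_ciInf
      intro y
      -- the averaged point
      set pt : ℕ → X := fun n => (n : ℝ)⁻¹ • ∑ k ∈ Finset.range n, F^[k] x₀ with hpt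
      have hptC : ∀ n : ℕ, 1 ≤ n → pt n ∈ C := by
        intro n hn
        have hsum : pt n = ∑ k ∈ Finset.range n, (n : ℝ)⁻¹ • F^[k] x₀ := by
          simp only [hpt, Finset.smul_sum]
        rw [hsum]
        apply hconv.sum_mem
        · intro i _; positivity
        · rw [Finset.sum_const, Finset.card_range, nsmul_eq_mul]
          field_simp
        · intro i _; exact hFkmem i x₀ hx₀
      have hptdisp : ∀ n : ℕ, 1 ≤ n → F (pt n) - pt n = (n : ℝ)⁻¹ • (F^[n] x₀ - x₀) := by
        intro n hn
        have hn' : (n : ℝ) ≠ 0 := by positivity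
        have hFpt : F (pt n) = (n : ℝ)⁻¹ • ∑ k ∈ Finset.range n, F^[k+1] x₀ := by
          have h1 : ∀ k ∈ Finset.range n, F^[k+1] x₀ = U (F^[k] x₀) + v := by
            intro k _; rw [Function.iterate_succ_apply']
          rw [Finset.sum_congr rfl h1, Finset.sum_add_distrib, Finset.sum_const,
            Finset.card_range, smul_add]
          have hv : (n : ℝ)⁻¹ • (n • v) = v := by
            rw [← Nat.cast_smul_eq_nsmul ℝ n v, smul_smul, inv_mul_cancel₀ hn', one_smul]
          rw [hv]
          simp only [hF, hpt, map_smul, map_sum]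
        rw [hFpt, hpt, ← smul_sub, ← Finset.sum_sub_distrib]
        congr 1
        have := Finset.sum_range_sub (f := fun k => F^[k] x₀) n
        simpa using this
      have hbound : ∀ n : ℕ, 1 ≤ n →
          (⨅ x : C, f x) ≤ f y + 2 * ‖x₀ - y‖ / n := by
        intro n hn
        have hn' : (0 : ℝ) < n := by positivity
        have hle : (⨅ x : C, f x) ≤ f (pt n) :=
          ciInf_le hbddC (⟨pt n, hptC n hn⟩ : C)
        have hfpt : f (pt n) = (n : ℝ)⁻¹ * ‖F^[n] x₀ - x₀‖ := by
          simp only [hf]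
          rw [hptdisp n hn, norm_smul, Real.norm_eq_abs, abs_of_nonneg (by positivity)]
        have h1 : ‖F^[n] x₀ - x₀‖ ≤ ‖F^[n] x₀ - F^[n] y‖ + ‖F^[n] y - y‖ + ‖y - x₀‖ := by
          have := norm_sub_le_norm_sub_add_norm_sub (F^[n] x₀) (F^[n] y) x₀
          have h2 := norm_sub_le_norm_sub_add_norm_sub (F^[n] y) y x₀
          linarith
        rw [hisoN] at h1
        have h3 : ‖F^[n] y - y‖ ≤ n * f y := hdisp n y
        have h4 : ‖y - x₀‖ = ‖x₀ - y‖ := norm_sub_rev _ _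
        have h5 : f (pt n) ≤ f y + 2 * ‖x₀ - y‖ / n := by
          rw [hfpt]
          have h6 : ‖F^[n] x₀ - x₀‖ ≤ n * f y + 2 * ‖x₀ - y‖ := by linarith
          calc (n : ℝ)⁻¹ * ‖F^[n] x₀ - x₀‖ ≤ (n : ℝ)⁻¹ * (n * f y + 2 * ‖x₀ - y‖) :=
                mul_le_mul_of_nonneg_left h6 (by positivity)
            _ = f y + 2 * ‖x₀ - y‖ / n := by field_simp
        linarith
      have htend : Filter.Tendsto (fun n : ℕ => f y + 2 * ‖x₀ - y‖ / n)
          Filter.atTop (nhds (f y)) := by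
        have := Filter.Tendsto.const_add (f y)
          (tendsto_const_div_atTop_nhds_zero_nat (2 * ‖x₀ - y‖))
        simpa using this
      refine ge_of_tendsto htend ?_
      filter_upwards [Filter.eventually_ge_atTop 1] with n hn using hbound n hn
    · -- inf over X ≤ inf over C
      apply le_ciInf
      intro c
      exact ciInf_le hbdd (c : X)
  refine ⟨key, fun x hx => by rw [key], ?_⟩
  rintro ⟨x, hx, hfx⟩
  exact ⟨x, by rw [← key]; exact hfx⟩
end

section
/- Let V be a finite-dimensional real inner product space and let F : V → V be an affine isometry (F x = U x + v with U a linear isometry of V and v ∈ V). Then for every integer s ≥ 1, the iterate F^s satisfies min(F^s) = s · min(F) and Min(F) ⊆ Min(F^s). -/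
/-- For an affine isometry `F x = U x + v` of a finite-dimensional real inner
product space and any integer `s ≥ 1`, one has `min (F^s) = s * min F` and
`Min F ⊆ Min (F^s)`. -/
theorem min_iterate_affine_isometry
    {V : Type*} [NormedAddCommGroup V] [InnerProductSpace ℝ V]
    [FiniteDimensional ℝ V]
    (U : V →ₗᵢ[ℝ] V) (v : V) (s : ℕ) (hs : 1 ≤ s) :
    (⨅ x : V, dist x ((fun y => U y + v)^[s] x)) =
      (s : ℝ) * ⨅ x : V, dist x (U x + v) ∧
    {x : V | dist x (U x + v) = ⨅ y : V, dist y (U y + v)} ⊆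
      {x : V | dist x ((fun y => U y + v)^[s] x) =
        ⨅ y : V, dist y ((fun z => U z + v)^[s] y)} := by
  set F : V → V := fun y => U y + v with hF
  have hs0 : (s : ℝ) ≠ 0 := by positivity
  have hdistF : ∀ a b : V, dist (F a) (F b) = dist a b := by
    intro a b
    show dist (U a + v) (U b + v) = dist a b
    rw [dist_add_right, U.dist_map]
  have hstep : ∀ (k : ℕ) (x : V), dist (F^[k] x) (F^[k+1] x) = dist x (F x) := by
    intro k x
    induction k with
    | zero => simp
    | succ n ih =>
      rw [Function.iterate_succ_apply' F n, Function.iterate_succ_apply' F (n+1), hdistF]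
      exact ih
  have bdd : ∀ n : ℕ, BddBelow (Set.range fun x : V => dist x (F^[n] x)) := by
    intro n
    exact ⟨0, by rintro _ ⟨x, rfl⟩; exact dist_nonneg⟩
  have hA : ∀ (n : ℕ) (x : V), dist x (F^[n] x) ≤ (n : ℝ) * dist x (F x) := by
    intro n x
    induction n with
    | zero => simp
    | succ n ih =>
      calc dist x (F^[n+1] x)
          ≤ dist x (F^[n] x) + dist (F^[n] x) (F^[n+1] x) := dist_triangle _ _ _
        _ ≤ (n : ℝ) * dist x (F x) + dist x (F x) := by
            rw [hstep]; linarith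
        _ = ((n + 1 : ℕ) : ℝ) * dist x (F x) := by push_cast; ring
  have hB : ∀ x : V, (s : ℝ) * (⨅ y : V, dist y (F y)) ≤ dist x (F^[s] x) := by
    intro x
    set y : V := (s : ℝ)⁻¹ • ∑ k ∈ Finset.range s, F^[k] x with hy
    have hUF : ∀ k : ℕ, U (F^[k] x) = F^[k+1] x - v := by
      intro k
      rw [Function.iterate_succ_apply' F k]
      show U (F^[k] x) = (U (F^[k] x) + v) - v
      abel
    have hFy : F y = (s : ℝ)⁻¹ • ∑ k ∈ Finset.range s, F^[k+1] x := by
      show U y + v = _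
      rw [hy, U.map_smul, map_sum]
      simp only [hUF]
      rw [Finset.sum_sub_distrib, Finset.sum_const, Finset.card_range, smul_sub]
      rw [← Nat.cast_smul_eq_nsmul ℝ s v, smul_smul, inv_mul_cancel₀ hs0, one_smul]
      abel
    have hsub : y - F y = (s : ℝ)⁻¹ • (x - F^[s] x) := by
      rw [hFy, hy, ← smul_sub, ← Finset.sum_sub_distrib, Finset.sum_range_sub']
      simp
    have hdy : dist y (F y) = (s : ℝ)⁻¹ * dist x (F^[s] x) := by
      rw [dist_eq_norm, hsub, norm_smul, dist_eq_norm]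
      congr 1
      rw [Real.norm_eq_abs, abs_of_nonneg (by positivity)]
    have hle : (⨅ y : V, dist y (F y)) ≤ (s : ℝ)⁻¹ * dist x (F^[s] x) := by
      rw [← hdy]
      exact ciInf_le (by simpa using bdd 1) y
    calc (s : ℝ) * (⨅ y : V, dist y (F y))
        ≤ (s : ℝ) * ((s : ℝ)⁻¹ * dist x (F^[s] x)) :=
          mul_le_mul_of_nonneg_left hle (by positivity)
      _ = dist x (F^[s] x) := by field_simp
  have hFs1 : (fun x : V => dist x (F x)) = fun x : V => dist x (F^[1] x) := by
    simp
  have inf1 : (⨅ x : V, dist x (F^[s] x)) = (s : ℝ) * ⨅ x : V, dist x (F x) := by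
    apply le_antisymm
    · have hmul : (s : ℝ) * (⨅ x : V, dist x (F x)) = ⨅ x : V, (s : ℝ) * dist x (F x) :=
        Real.mul_iInf_of_nonneg (by positivity) _
      rw [hmul]
      refine le_ciInf fun x => ?_
      exact (ciInf_le (bdd s) x).trans (hA s x)
    · exact le_ciInf hB
  refine ⟨inf1, ?_⟩
  intro x hx
  simp only [Set.mem_setOf_eq] at hx ⊢
  apply le_antisymm
  · calc dist x (F^[s] x) ≤ (s : ℝ) * dist x (F x) := hA s x
      _ = (s : ℝ) * ⨅ y : V, dist y (F y) := by rw [hx]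
      _ = ⨅ y : V, dist y (F^[s] y) := inf1.symm
  · exact ciInf_le (bdd s) x
end

section
/- Let V be a finite-dimensional real inner product space, let F : V → V be an affine isometry (F x = U x + v with U a linear isometry of V and v ∈ V), suppose a := min(F) > 0, and let x ∈ Min(F). Then the linear part U fixes the displacement vector F x − x, and the map c : ℝ → V defined by c(t) = x + (t/a) · (F x − x) satisfies ‖c(s) − c(t)‖ = |s − t| for all s, t ∈ ℝ (i.e. c is an isometric embedding of ℝ, an axis of F) and F(c(t)) = c(t + a) for all t ∈ ℝ. -/
/-- Let `F x = U x + v` be an affine isometry of a finite-dimensional real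
inner product space with `a = min F > 0`, and let `x ∈ Min F`.  Then the linear
part `U` fixes the displacement `F x - x`, and `c t = x + (t/a) • (F x - x)`
is a geodesic line (an axis) with `F (c t) = c (t + a)` for all `t`. -/
theorem axis_of_hyperbolic_affine_isometry
    {V : Type*} [NormedAddCommGroup V] [InnerProductSpace ℝ V]
    [FiniteDimensional ℝ V]
    (U : V →ₗᵢ[ℝ] V) (v : V) (a : ℝ)
    (ha_def : a = ⨅ y : V, dist y (U y + v)) (ha : 0 < a)
    (x : V) (hx : dist x (U x + v) = a) :
    U ((U x + v) - x) = (U x + v) - x ∧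
    (∀ s t : ℝ, ‖(x + (s / a) • ((U x + v) - x)) -
        (x + (t / a) • ((U x + v) - x))‖ = |s - t|) ∧
    (∀ t : ℝ, U (x + (t / a) • ((U x + v) - x)) + v =
        x + ((t + a) / a) • ((U x + v) - x)) := by
  set w : V := (U x + v) - x with hw_def
  clear_value w
  have hw : ‖w‖ = a := by
    rw [hw_def, ← hx, dist_eq_norm, ← norm_neg]; congr 1; abel
  have hUwn : ‖U w‖ = a := by rw [U.norm_map]; exact hw
  have hbd : BddBelow (Set.range fun y => dist y (U y + v)) :=
    ⟨0, by rintro _ ⟨y, rfl⟩; exact dist_nonneg⟩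
  have hle : a ≤ dist (x + (2:ℝ)⁻¹ • w) (U (x + (2:ℝ)⁻¹ • w) + v) := by
    rw [ha_def]; exact ciInf_le hbd _
  have hmid : dist (x + (2:ℝ)⁻¹ • w) (U (x + (2:ℝ)⁻¹ • w) + v)
      = (2:ℝ)⁻¹ * ‖w + U w‖ := by
    have hFx : U x + v = x + w := by rw [hw_def]; abel
    rw [dist_eq_norm, map_add, map_smul]
    have : x + (2:ℝ)⁻¹ • w - (U x + (2:ℝ)⁻¹ • U w + v)
        = -((2:ℝ)⁻¹ • (w + U w)) := by
      rw [show U x + (2:ℝ)⁻¹ • U w + v = (U x + v) + (2:ℝ)⁻¹ • U w from by abel,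
        hFx, smul_add]
      module
    rw [this, norm_neg, norm_smul]
    norm_num
  have hsum : 2 * a ≤ ‖w + U w‖ := by
    rw [hmid] at hle; linarith
  have hUw : U w = w := by
    have hpar := parallelogram_law_with_norm ℝ w (U w)
    have h1 : ‖w - U w‖ = 0 := by nlinarith [norm_nonneg (w - U w), norm_nonneg (w + U w)]
    have := sub_eq_zero.mp (norm_eq_zero.mp h1)
    exact this.symm
  refine ⟨hUw, ?_, ?_⟩
  · intro s t
    have : x + (s / a) • w - (x + (t / a) • w) = ((s - t) / a) • w := by
      rw [sub_div, sub_smul]; abel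
    rw [this, norm_smul, hw, Real.norm_eq_abs, abs_div, abs_of_pos ha,
      div_mul_cancel₀ _ (ne_of_gt ha)]
  · intro t
    rw [map_add, map_smul, hUw]
    have hFx : U x + v = x + w := by rw [hw_def]; abel
    have h2 : ((t + a) / a) • w = (t / a) • w + w := by
      rw [show ((t + a) / a) = t / a + 1 from by field_simp, add_smul, one_smul]
    rw [h2, show U x + (t / a) • w + v = (U x + v) + (t / a) • w from by abel, hFx]
    abel
end

section
/- Let X and Y be nonempty metric spaces, let F : X → X and G : Y → Y be isometries, and equip X × Y with the ℓ²-product metric dist((x, y), (x', y')) = sqrt(dist(x, x')² + dist(y, y')²). Then the map H(x, y) = (F x, G y) is an isometry of X × Y, min(H) = sqrt(min(F)² + min(G)²), and Min(H) = Min(F) ×ˢ Min(G). -/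
/-- Let `F` and `G` be isometries of nonempty metric spaces `X` and `Y`, and
equip `X × Y` with the `ℓ²`-product metric (realized as `WithLp 2 (X × Y)`).
Then `H (x, y) = (F x, G y)` is an isometry with
`min H = sqrt (min F ^ 2 + min G ^ 2)` and `Min H = Min F ×ˢ Min G`. -/
theorem min_prod_isometry {X Y : Type*} [MetricSpace X] [MetricSpace Y]
    [Nonempty X] [Nonempty Y]
    (F : X → X) (hF : ∀ x y, dist (F x) (F y) = dist x y)
    (G : Y → Y) (hG : ∀ x y, dist (G x) (G y) = dist x y)
    (H : WithLp 2 (X × Y) → WithLp 2 (X × Y))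
    (hH : ∀ p : WithLp 2 (X × Y), H p = (WithLp.equiv 2 (X × Y)).symm
      (F ((WithLp.equiv 2 (X × Y)) p).1, G ((WithLp.equiv 2 (X × Y)) p).2)) :
    (∀ p q : WithLp 2 (X × Y), dist (H p) (H q) = dist p q) ∧
    (⨅ p : WithLp 2 (X × Y), dist p (H p)) =
      Real.sqrt ((⨅ x : X, dist x (F x)) ^ 2 + (⨅ y : Y, dist y (G y)) ^ 2) ∧
    {p : WithLp 2 (X × Y) | dist p (H p) = ⨅ q : WithLp 2 (X × Y), dist q (H q)} =
      (WithLp.equiv 2 (X × Y)).symm ''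
        ({x : X | dist x (F x) = ⨅ x' : X, dist x' (F x')} ×ˢ
         {y : Y | dist y (G y) = ⨅ y' : Y, dist y' (G y')}) := by
  haveI : Nonempty (WithLp 2 (X × Y)) :=
    ⟨(WithLp.equiv 2 (X × Y)).symm (Classical.arbitrary X, Classical.arbitrary Y)⟩
  set A := ⨅ x : X, dist x (F x) with hAdef
  set B := ⨅ y : Y, dist y (G y) with hBdef
  have hA0 : 0 ≤ A := Real.iInf_nonneg fun _ => dist_nonneg
  have hB0 : 0 ≤ B := Real.iInf_nonneg fun _ => dist_nonneg
  have bddF : BddBelow (Set.range fun x : X => dist x (F x)) :=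
    ⟨0, by rintro _ ⟨x, rfl⟩; exact dist_nonneg⟩
  have bddG : BddBelow (Set.range fun y : Y => dist y (G y)) :=
    ⟨0, by rintro _ ⟨y, rfl⟩; exact dist_nonneg⟩
  have hAle : ∀ x, A ≤ dist x (F x) := fun x => ciInf_le bddF x
  have hBle : ∀ y, B ≤ dist y (G y) := fun y => ciInf_le bddG y
  have hdist : ∀ p q : WithLp 2 (X × Y),
      dist p q = Real.sqrt (dist p.fst q.fst ^ 2 + dist p.snd q.snd ^ 2) := by
    intro p q
    rw [WithLp.prod_dist_eq_add (by norm_num), Real.sqrt_eq_rpow]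
    norm_num
  have key : ∀ p : WithLp 2 (X × Y),
      dist p (H p) = Real.sqrt (dist p.fst (F p.fst) ^ 2 + dist p.snd (G p.snd) ^ 2) := by
    intro p
    rw [hH p, hdist]
    rfl
  have iso : ∀ p q : WithLp 2 (X × Y), dist (H p) (H q) = dist p q := by
    intro p q
    rw [hH p, hH q, hdist, hdist]
    show Real.sqrt (dist (F p.fst) (F q.fst) ^ 2 + dist (G p.snd) (G q.snd) ^ 2) = _
    rw [hF, hG]
  have L0 : 0 ≤ Real.sqrt (A ^ 2 + B ^ 2) := Real.sqrt_nonneg _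
  have hmin : (⨅ p : WithLp 2 (X × Y), dist p (H p)) = Real.sqrt (A ^ 2 + B ^ 2) := by
    apply le_antisymm
    · have htend : Filter.Tendsto (fun ε : ℝ => Real.sqrt ((A + ε) ^ 2 + (B + ε) ^ 2))
          (nhdsWithin 0 (Set.Ioi 0)) (nhds (Real.sqrt (A ^ 2 + B ^ 2))) := by
        have hc : Continuous fun ε : ℝ => Real.sqrt ((A + ε) ^ 2 + (B + ε) ^ 2) := by
          fun_prop
        have := hc.tendsto 0
        simp only [add_zero] at this
        exact this.mono_left nhdsWithin_le_nhds
      refine ge_of_tendsto htend ?_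
      filter_upwards [self_mem_nhdsWithin] with ε (hε : 0 < ε)
      obtain ⟨x, hx⟩ := exists_lt_of_ciInf_lt (show A < A + ε by linarith)
      obtain ⟨y, hy⟩ := exists_lt_of_ciInf_lt (show B < B + ε by linarith)
      refine le_trans (ciInf_le ⟨0, by rintro _ ⟨p, rfl⟩; exact dist_nonneg⟩
        ((WithLp.equiv 2 (X × Y)).symm (x, y))) ?_
      rw [key]
      apply Real.sqrt_le_sqrt
      have h1 : dist x (F x) ^ 2 ≤ (A + ε) ^ 2 :=
        pow_le_pow_left₀ dist_nonneg hx.le 2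
      have h2 : dist y (G y) ^ 2 ≤ (B + ε) ^ 2 :=
        pow_le_pow_left₀ dist_nonneg hy.le 2
      exact add_le_add h1 h2
    · refine le_ciInf fun p => ?_
      rw [key]
      apply Real.sqrt_le_sqrt
      exact add_le_add (pow_le_pow_left₀ hA0 (hAle _) 2) (pow_le_pow_left₀ hB0 (hBle _) 2)
  have hmin2 : (⨅ q : WithLp 2 (X × Y),
      Real.sqrt (dist q.fst (F q.fst) ^ 2 + dist q.snd (G q.snd) ^ 2)) =
      Real.sqrt (A ^ 2 + B ^ 2) := by
    rw [← hmin]; exact iInf_congr fun q => (key q).symm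
  refine ⟨iso, hmin, ?_⟩
  ext p
  simp only [Set.mem_setOf_eq, Set.mem_image, Set.mem_prod, key, hmin2]
  constructor
  · intro h
    have hsq : dist p.fst (F p.fst) ^ 2 + dist p.snd (G p.snd) ^ 2 = A ^ 2 + B ^ 2 := by
      have := congrArg (· ^ 2) h
      simpa [Real.sq_sqrt (by positivity : (0:ℝ) ≤ dist p.fst (F p.fst) ^ 2 + dist p.snd (G p.snd) ^ 2),
        Real.sq_sqrt (by positivity : (0:ℝ) ≤ A ^ 2 + B ^ 2)] using this
    have h1 : dist p.fst (F p.fst) ^ 2 = A ^ 2 := by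
      have := pow_le_pow_left₀ hA0 (hAle p.fst) 2
      have := pow_le_pow_left₀ hB0 (hBle p.snd) 2
      linarith
    have h2 : dist p.snd (G p.snd) ^ 2 = B ^ 2 := by linarith
    have h1' : dist p.fst (F p.fst) = A := by
      have := congrArg Real.sqrt h1
      rwa [Real.sqrt_sq dist_nonneg, Real.sqrt_sq hA0] at this
    have h2' : dist p.snd (G p.snd) = B := by
      have := congrArg Real.sqrt h2
      rwa [Real.sqrt_sq dist_nonneg, Real.sqrt_sq hB0] at this
    exact ⟨(p.fst, p.snd), ⟨h1', h2'⟩, rfl⟩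
  · rintro ⟨⟨x, y⟩, ⟨hx, hy⟩, rfl⟩
    show Real.sqrt (dist x (F x) ^ 2 + dist y (G y) ^ 2) = _
    rw [hx, hy]
end

section
/- Let V be a finite-dimensional real inner product space, let σ : V → V be a linear isometry, let r ≥ 1 be an integer with σ^r = id, let v ∈ V, and let F : V → V be the affine isometry F x = σ x + v. Then Min(F) is nonempty, and for every x ∈ V one has dist(x, F x) ≥ 2 · sin(π / r) · dist(x, Min(F)) (where dist(x, Min(F)) denotes the infimum of distances from x to points of Min(F)). -/
open Real RealInnerProductSpace

section Aux

variable {V : Type*} [NormedAddCommGroup V] [InnerProductSpace ℝ V]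

/-- Eigenvalue bound for `T = σ + σ^(r-1)` when `σ^r = 1`. -/
lemma disp_eig_bound (σ : V →ₗᵢ[ℝ] V) (r : ℕ) (hr : 1 ≤ r)
    (hσ : σ.toLinearMap ^ r = 1)
    (μ : ℝ) (w : V) (hw : ‖w‖ = 1)
    (hTw : (σ.toLinearMap + σ.toLinearMap ^ (r - 1)) w = μ • w) :
    σ w = w ∨ μ ≤ 2 * Real.cos (2 * Real.pi / r) := by
  set S := σ.toLinearMap with hS
  have hww : ⟪w, w⟫ = 1 := by
    rw [real_inner_self_eq_norm_sq, hw]; norm_num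
  have hσw : ∀ x : V, S x = σ x := fun x => rfl
  have hpow : S * S ^ (r - 1) = 1 := by
    rw [← pow_succ']
    have : r - 1 + 1 = r := by omega
    rw [this, hσ]
  have hrm : ⟪(S ^ (r - 1)) w, w⟫ = ⟪σ w, w⟫ := by
    have h1 : ⟪(S ^ (r - 1)) w, w⟫ = ⟪σ ((S ^ (r - 1)) w), σ w⟫ :=
      (σ.inner_map_map _ _).symm
    have h2 : σ ((S ^ (r - 1)) w) = w := by
      rw [← hσw, ← Module.End.mul_apply, hpow, Module.End.one_apply]
    rw [h1, h2, real_inner_comm]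
  have hμ : μ = 2 * ⟪σ w, w⟫ := by
    have h0 : ⟪(S + S ^ (r - 1)) w, w⟫ = ⟪μ • w, w⟫ := by rw [hTw]
    rw [LinearMap.add_apply, inner_add_left, real_inner_smul_left, hww, hrm, hσw] at h0
    linarith
  have habs : |⟪σ w, w⟫| ≤ 1 := by
    have := abs_real_inner_le_norm (σ w) w
    simpa [σ.norm_map, hw] using this
  have hle : ⟪σ w, w⟫ ≤ 1 := (abs_le.mp habs).2
  have hge : -1 ≤ ⟪σ w, w⟫ := (abs_le.mp habs).1
  by_cases hcase : ⟪σ w, w⟫ = 1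
  · left
    have h1 : ⟪σ w, w⟫ = ‖σ w‖ * ‖w‖ := by rw [σ.norm_map, hw]; simpa using hcase
    have h2 := inner_eq_norm_mul_iff_real.mp h1
    rwa [hw, σ.norm_map, hw, one_smul, one_smul] at h2
  · right
    set c := ⟪σ w, w⟫ with hc
    set φ := Real.arccos c with hφ
    have hφcos : Real.cos φ = c := Real.cos_arccos hge hle
    have hφpos : 0 < φ := Real.arccos_pos.mpr (lt_of_le_of_ne hle hcase)
    have hφle : φ ≤ π := Real.arccos_le_pi c
    -- the recurrence : ⟪S^k w, w⟫ = cos (k φ)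
    have hrec : ∀ k : ℕ, (S ^ (k + 1 + 1)) w = μ • (S ^ (k + 1)) w - (S ^ k) w := by
      intro k
      have h0 := congrArg (S ^ (k + 1)) hTw
      simp only [LinearMap.add_apply, map_add, map_smul] at h0
      have e1 : (S ^ (k + 1)) (S w) = (S ^ (k + 1 + 1)) w := by
        rw [← Module.End.mul_apply, ← pow_succ]
      have e2 : (S ^ (k + 1)) ((S ^ (r - 1)) w) = (S ^ k) w := by
        rw [← Module.End.mul_apply, ← pow_add]
        have : k + 1 + (r - 1) = k + r := by omega
        rw [this, pow_add, hσ, mul_one]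
      rw [e1, e2] at h0
      rw [eq_sub_iff_add_eq, h0]
    have hkey : ∀ k : ℕ, ⟪(S ^ k) w, w⟫ = Real.cos (k * φ) ∧
        ⟪(S ^ (k + 1)) w, w⟫ = Real.cos ((k + 1 : ℕ) * φ) := by
      intro k
      induction k with
      | zero =>
        constructor
        · rw [pow_zero, Module.End.one_apply, hww, Nat.cast_zero, zero_mul, Real.cos_zero]
        · rw [pow_one, hσw w, ← hc, ← hφcos]
          norm_num
      | succ k ih =>
        refine ⟨ih.2, ?_⟩
        have h1 : ⟪(S ^ (k + 1 + 1)) w, w⟫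
            = μ * ⟪(S ^ (k + 1)) w, w⟫ - ⟪(S ^ k) w, w⟫ := by
          rw [hrec k, inner_sub_left, real_inner_smul_left]
        have hA : ((k : ℝ) + 1 + 1) * φ = ((k : ℝ) + 1) * φ + φ := by ring
        have hB : (k : ℝ) * φ = ((k : ℝ) + 1) * φ - φ := by ring
        have := ih.1
        have h2 := ih.2
        push_cast at h2 ⊢
        rw [h1, h2, this, hμ, ← hφcos, hA, hB, Real.cos_add, Real.cos_sub]
        ring
    have hcos1 : Real.cos ((r : ℝ) * φ) = 1 := by
      have h := (hkey r).1
      rw [hσ, Module.End.one_apply, hww] at h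
      exact h.symm
    obtain ⟨n, hn⟩ := (Real.cos_eq_one_iff _).mp hcos1
    have hrpos : (0 : ℝ) < r := by
      have : 0 < r := hr
      exact_mod_cast this
    have hnpos : 0 < (n : ℝ) := by
      have h1 : 0 < (n : ℝ) * (2 * π) := by
        rw [hn]; exact mul_pos hrpos hφpos
      nlinarith [Real.pi_pos]
    have hn1 : (1 : ℝ) ≤ (n : ℝ) := by
      have : (0 : ℤ) < n := by exact_mod_cast hnpos
      exact_mod_cast this
    have hφge : 2 * π / r ≤ φ := by
      rw [div_le_iff₀ hrpos]
      nlinarith [Real.pi_pos]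
    have := Real.cos_le_cos_of_nonneg_of_le_pi
      (by positivity : (0:ℝ) ≤ 2 * π / r) hφle hφge
    rw [hφcos] at this
    rw [hμ]
    linarith

end Aux

section Aux2

variable {V : Type*} [NormedAddCommGroup V] [InnerProductSpace ℝ V] [FiniteDimensional ℝ V]

lemma disp_key (σ : V →ₗᵢ[ℝ] V) (r : ℕ) (hr : 1 ≤ r)
    (hσ : σ.toLinearMap ^ r = 1)
    (u : V) (hu : u ∈ (LinearMap.ker (σ.toLinearMap - 1))ᗮ) :
    2 * Real.sin (π / r) * ‖u‖ ≤ ‖σ u - u‖ := by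
  set S := σ.toLinearMap with hS
  set T := S + S ^ (r - 1) with hT
  have hσw : ∀ x : V, S x = σ x := fun x => rfl
  have hpow : S * S ^ (r - 1) = 1 := by
    rw [← pow_succ']
    have : r - 1 + 1 = r := by omega
    rw [this, hσ]
  have hadj : ∀ x y : V, ⟪S x, y⟫ = ⟪x, (S ^ (r - 1)) y⟫ := by
    intro x y
    have h2 : σ ((S ^ (r - 1)) y) = y := by
      rw [← hσw, ← Module.End.mul_apply, hpow, Module.End.one_apply]
    calc ⟪S x, y⟫ = ⟪σ x, σ ((S ^ (r - 1)) y)⟫ := by rw [h2, hσw]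
    _ = ⟪x, (S ^ (r - 1)) y⟫ := σ.inner_map_map _ _
  have hsymm : T.IsSymmetric := by
    intro x y
    simp only [hT, LinearMap.add_apply, inner_add_left, inner_add_right]
    have h1 : ⟪S x, y⟫ = ⟪x, (S ^ (r - 1)) y⟫ := hadj x y
    have h2 : ⟪(S ^ (r - 1)) x, y⟫ = ⟪x, S y⟫ :=
      calc ⟪(S ^ (r - 1)) x, y⟫ = ⟪y, (S ^ (r - 1)) x⟫ := real_inner_comm _ _
        _ = ⟪S y, x⟫ := (hadj y x).symm
        _ = ⟪x, S y⟫ := real_inner_comm _ _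
    linarith
  set n := Module.finrank ℝ V with hn'
  have hn : Module.finrank ℝ V = n := rfl
  set e := hsymm.eigenvectorBasis hn with he
  set μ := hsymm.eigenvalues hn with hμ
  have heig : ∀ i, T (e i) = μ i • e i := fun i => by
    have := hsymm.apply_eigenvectorBasis hn i
    exact this
  set c := fun i => e.repr u i with hc
  have hb : ∀ i, (2 - 2 * Real.cos (2 * π / r)) * (c i) ^ 2 ≤ (2 - μ i) * (c i) ^ 2 := by
    intro i
    rcases disp_eig_bound σ r hr hσ (μ i) (e i) (e.orthonormal.1 i) (heig i) with h | h
    · have hK : e i ∈ LinearMap.ker (S - 1) := by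
        rw [LinearMap.mem_ker, LinearMap.sub_apply, Module.End.one_apply, hσw, h, sub_self]
      have hc0 : c i = 0 := by
        rw [hc]
        simp only [e.repr_apply_apply]
        exact (Submodule.mem_orthogonal _ u).mp hu (e i) hK
      rw [hc0]
      ring_nf
      exact le_refl _
    · nlinarith [sq_nonneg (c i)]
  have hinner : ∀ x y : V, ⟪x, y⟫ = ∑ i, e.repr x i * e.repr y i := by
    intro x y
    rw [← e.repr.inner_map_map x y, PiLp.inner_apply]
    simp [RCLike.inner_apply, starRingEnd_apply, star_trivial]
    exact Finset.sum_congr rfl fun i _ => mul_comm _ _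
  have hnormsq : ‖u‖ ^ 2 = ∑ i, (c i) ^ 2 := by
    rw [← real_inner_self_eq_norm_sq, hinner u u]
    exact Finset.sum_congr rfl fun i _ => by rw [hc]; ring
  have hTuu : ⟪T u, u⟫ = ∑ i, μ i * (c i) ^ 2 := by
    rw [hinner (T u) u]
    refine Finset.sum_congr rfl fun i _ => ?_
    have h := hsymm.eigenvectorBasis_apply_self_apply hn u i
    rw [← he, ← hμ] at h
    rw [h, hc]
    simp only [RCLike.ofReal_real_eq_id, id_eq]
    ring
  have hT2 : ⟪T u, u⟫ = 2 * ⟪σ u, u⟫ := by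
    simp only [hT, LinearMap.add_apply, inner_add_left]
    have h2 : ⟪(S ^ (r - 1)) u, u⟫ = ⟪S u, u⟫ :=
      calc ⟪(S ^ (r - 1)) u, u⟫ = ⟪u, (S ^ (r - 1)) u⟫ := real_inner_comm _ _
        _ = ⟪S u, u⟫ := (hadj u u).symm
    rw [h2, hσw]
    ring
  have hns : ‖σ u - u‖ ^ 2 = 2 * ‖u‖ ^ 2 - ⟪T u, u⟫ := by
    rw [norm_sub_sq_real, σ.norm_map, hT2]
    ring
  have hsum : (2 - 2 * Real.cos (2 * π / r)) * ‖u‖ ^ 2 ≤ ‖σ u - u‖ ^ 2 := by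
    rw [hns, hTuu, hnormsq, Finset.mul_sum]
    have h1 : 2 * ∑ i, (c i) ^ 2 - ∑ i, μ i * (c i) ^ 2 = ∑ i, (2 - μ i) * (c i) ^ 2 := by
      rw [Finset.mul_sum, ← Finset.sum_sub_distrib]
      exact Finset.sum_congr rfl fun i _ => by ring
    rw [h1]
    exact Finset.sum_le_sum fun i _ => hb i
  have hrpos : (0 : ℝ) < r := by
    have : 0 < r := hr
    exact_mod_cast this
  have hfour : 2 - 2 * Real.cos (2 * π / r) = (2 * Real.sin (π / r)) ^ 2 := by
    have h1 : Real.cos (2 * (π / r)) = 2 * Real.cos (π / r) ^ 2 - 1 := Real.cos_two_mul _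
    have h2 : Real.sin (π / r) ^ 2 + Real.cos (π / r) ^ 2 = 1 := Real.sin_sq_add_cos_sq _
    have h3 : 2 * π / r = 2 * (π / r) := by ring
    rw [h3, h1]
    nlinarith [h2]
  have hsin : 0 ≤ Real.sin (π / r) := by
    have hple : π / r ≤ π := by
      rw [div_le_iff₀ hrpos]
      have hr1 : (1 : ℝ) ≤ (r : ℝ) := by exact_mod_cast hr
      nlinarith [Real.pi_pos]
    exact Real.sin_nonneg_of_nonneg_of_le_pi (by positivity) hple
  have hA : (2 * Real.sin (π / r) * ‖u‖) ^ 2 ≤ ‖σ u - u‖ ^ 2 := by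
    rw [mul_pow]
    rw [hfour] at hsum
    exact hsum
  nlinarith [norm_nonneg (σ u - u), norm_nonneg u, mul_nonneg (mul_nonneg (by norm_num : (0:ℝ) ≤ 2) hsin) (norm_nonneg u)]

end Aux2

/-- Let `F x = σ x + v` be an affine isometry of a finite-dimensional real
inner product space whose linear part `σ` satisfies `σ ^ r = 1` for some
`r ≥ 1`.  Then `Min F` is nonempty and
`dist x (F x) ≥ 2 * sin (π / r) * dist (x, Min F)` for every `x`. -/
theorem displacement_lower_bound_of_finite_order
    {V : Type*} [NormedAddCommGroup V] [InnerProductSpace ℝ V]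
    [FiniteDimensional ℝ V]
    (σ : V →ₗᵢ[ℝ] V) (r : ℕ) (hr : 1 ≤ r) (hσ : σ.toLinearMap ^ r = 1)
    (v : V) :
    {x : V | dist x (σ x + v) = ⨅ y : V, dist y (σ y + v)}.Nonempty ∧
    ∀ x : V, 2 * Real.sin (Real.pi / r) *
        Metric.infDist x {y : V | dist y (σ y + v) = ⨅ z : V, dist z (σ z + v)} ≤
      dist x (σ x + v) := by
  classical
  set A := σ.toLinearMap - (1 : V →ₗ[ℝ] V) with hA
  have hAx : ∀ x : V, A x = σ x - x := fun x => rfl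
  have hdist : ∀ y : V, dist y (σ y + v) = ‖A y + v‖ := by
    intro y
    rw [dist_eq_norm, show y - (σ y + v) = -(A y + v) from by rw [hAx y]; abel, norm_neg]
  set W := LinearMap.range A with hW
  obtain ⟨x₀, hx₀⟩ : ∃ x₀, A x₀ = ((W.orthogonalProjectionOnto (-v) : W) : V) :=
    LinearMap.mem_range.mp (SetLike.coe_mem (W.orthogonalProjectionOnto (-v)))
  have hperp : ∀ z : V, ⟪A z, A x₀ + v⟫ = 0 := by
    intro z
    have hmem : -v - ((W.orthogonalProjectionOnto (-v) : W) : V) ∈ Wᗮ :=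
      Submodule.sub_starProjection_mem_orthogonal (K := W) (-v)
    have h1 : A x₀ + v = -(-v - ((W.orthogonalProjectionOnto (-v) : W) : V)) := by
      rw [hx₀]; abel
    rw [h1, inner_neg_right,
      (Submodule.mem_orthogonal W _).mp hmem (A z) (LinearMap.mem_range_self A z), neg_zero]
  have hpyth : ∀ y : V, ‖A y + v‖ ^ 2 = ‖A (y - x₀)‖ ^ 2 + ‖A x₀ + v‖ ^ 2 := by
    intro y
    have h1 : A y + v = A (y - x₀) + (A x₀ + v) := by rw [map_sub]; abel
    rw [h1, norm_add_sq_real, hperp (y - x₀)]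
    ring
  have hmin : ∀ y : V, ‖A x₀ + v‖ ≤ ‖A y + v‖ := by
    intro y
    nlinarith [hpyth y, norm_nonneg (A (y - x₀)), norm_nonneg (A y + v),
      norm_nonneg (A x₀ + v)]
  have hbdd : BddBelow (Set.range fun y : V => dist y (σ y + v)) :=
    ⟨0, by rintro _ ⟨y, rfl⟩; exact dist_nonneg⟩
  have hinf : (⨅ y : V, dist y (σ y + v)) = dist x₀ (σ x₀ + v) := by
    apply le_antisymm
    · exact ciInf_le hbdd x₀
    · apply le_ciInf
      intro y
      rw [hdist y, hdist x₀]
      exact hmin y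
  have hx₀mem : x₀ ∈ {x : V | dist x (σ x + v) = ⨅ y : V, dist y (σ y + v)} := hinf.symm
  refine ⟨⟨x₀, hx₀mem⟩, ?_⟩
  intro x
  set K := LinearMap.ker A with hK
  set z := x - x₀ with hz
  set zK := ((K.orthogonalProjectionOnto z : K) : V) with hzK
  have hzKK : zK ∈ K := SetLike.coe_mem _
  have hmmem : x₀ + zK ∈ {y : V | dist y (σ y + v) = ⨅ z : V, dist z (σ z + v)} := by
    have hAe : A (x₀ + zK) + v = A x₀ + v := by
      rw [map_add, LinearMap.mem_ker.mp hzKK]; abel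
    show dist (x₀ + zK) (σ (x₀ + zK) + v) = _
    rw [hdist (x₀ + zK), hAe, ← hdist x₀, hinf]
  set u := z - zK with hu
  have huK : u ∈ Kᗮ := Submodule.sub_starProjection_mem_orthogonal (K := K) z
  have hrpos : (0 : ℝ) < r := by
    have : 0 < r := hr
    exact_mod_cast this
  have hsin : 0 ≤ Real.sin (Real.pi / r) := by
    have hple : Real.pi / r ≤ Real.pi := by
      rw [div_le_iff₀ hrpos]
      have hr1 : (1 : ℝ) ≤ (r : ℝ) := by exact_mod_cast hr
      nlinarith [Real.pi_pos]
    exact Real.sin_nonneg_of_nonneg_of_le_pi (by positivity) hple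
  have h1 : Metric.infDist x {y : V | dist y (σ y + v) = ⨅ z : V, dist z (σ z + v)} ≤ ‖u‖ := by
    calc Metric.infDist x {y : V | dist y (σ y + v) = ⨅ z : V, dist z (σ z + v)}
        ≤ dist x (x₀ + zK) := Metric.infDist_le_dist_of_mem hmmem
      _ = ‖u‖ := by rw [dist_eq_norm, hu, hz]; congr 1; abel
  have h2 : 2 * Real.sin (Real.pi / r) * ‖u‖ ≤ ‖σ u - u‖ :=
    disp_key σ r hr hσ u huK
  have h3 : ‖σ u - u‖ = ‖A u‖ := by rw [hAx u]
  have h4 : ‖A u‖ ≤ dist x (σ x + v) := by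
    rw [hdist x]
    have hAu : A u = A z := by
      rw [hu, map_sub, LinearMap.mem_ker.mp hzKK, sub_zero]
    have h5 : ‖A z‖ ^ 2 ≤ ‖A x + v‖ ^ 2 := by
      have h6 := hpyth x
      nlinarith [norm_nonneg (A x₀ + v)]
    rw [hAu]
    nlinarith [norm_nonneg (A z), norm_nonneg (A x + v)]
  calc 2 * Real.sin (Real.pi / r) *
      Metric.infDist x {y : V | dist y (σ y + v) = ⨅ z : V, dist z (σ z + v)}
      ≤ 2 * Real.sin (Real.pi / r) * ‖u‖ := by
        apply mul_le_mul_of_nonneg_left h1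
        positivity
    _ ≤ ‖σ u - u‖ := h2
    _ = ‖A u‖ := h3
    _ ≤ dist x (σ x + v) := h4
end

section
/- Let V be a finite-dimensional real inner product space, let σ : V → V be a linear isometry, let r ≥ 1 be an integer with σ^r = id, let v ∈ V, and let F : V → V be the affine isometry F x = σ x + v. Set v₀ = (1/r) · Σ_{i=0}^{r−1} σ^i(v) (the average of the σ-orbit of v). Then min(F) = ‖v₀‖, and every x ∈ Min(F) satisfies F x − x = v₀. -/
open scoped RealInnerProductSpace

/-- For the affine isometry `F x = σ x + v` of a finite-dimensional real inner
product space with `σ ^ r = 1`, `r ≥ 1`, let `v₀ = (1/r) • ∑_{i<r} σ^i v` be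
the average of the `σ`-orbit of `v`.  Then `min F = ‖v₀‖` and every
`x ∈ Min F` satisfies `F x - x = v₀`. -/
theorem min_eq_norm_average_of_finite_order
    {V : Type*} [NormedAddCommGroup V] [InnerProductSpace ℝ V]
    [FiniteDimensional ℝ V]
    (σ : V →ₗᵢ[ℝ] V) (r : ℕ) (hr : 1 ≤ r) (hσ : σ.toLinearMap ^ r = 1)
    (v : V) (v₀ : V)
    (hv₀ : v₀ = (r : ℝ)⁻¹ • ∑ i ∈ Finset.range r, (σ.toLinearMap ^ i) v) :
    (⨅ y : V, dist y (σ y + v)) = ‖v₀‖ ∧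
    ∀ x ∈ {y : V | dist y (σ y + v) = ⨅ z : V, dist z (σ z + v)},
      (σ x + v) - x = v₀ := by
  set L := σ.toLinearMap with hL
  have hLσ : ∀ x : V, L x = σ x := fun x => rfl
  have hrR : (r : ℝ) ≠ 0 := Nat.cast_ne_zero.mpr (by omega)
  have hpow : ∀ i, (L ^ (i + 1)) v = σ ((L ^ i) v) := by
    intro i
    rw [pow_succ']
    rfl
  have hLr : (L ^ r) v = v := by rw [hσ]; rfl
  -- σ fixes v₀
  have hshift : ∑ i ∈ Finset.range r, (L ^ (i + 1)) v
      = ∑ i ∈ Finset.range r, (L ^ i) v := by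
    have h1 := Finset.sum_range_succ (fun i => (L ^ i) v) r
    have h2 := Finset.sum_range_succ' (fun i => (L ^ i) v) r
    simp only [pow_zero, Module.End.one_apply, hLr] at h1 h2
    have := h1.symm.trans h2
    -- Σ f i + v = Σ f (i+1) + v
    exact (add_right_cancel this).symm
  have hσv₀ : σ v₀ = v₀ := by
    rw [hv₀, map_smul, map_sum]
    congr 1
    calc ∑ i ∈ Finset.range r, σ ((L ^ i) v)
        = ∑ i ∈ Finset.range r, (L ^ (i + 1)) v := by
          exact Finset.sum_congr rfl fun i _ => (hpow i).symm
      _ = ∑ i ∈ Finset.range r, (L ^ i) v := hshift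
  -- orthogonality
  have horth : ∀ u : V, ⟪σ u - u, v₀⟫ = 0 := by
    intro u
    rw [inner_sub_left]
    have : ⟪σ u, v₀⟫ = ⟪u, v₀⟫ := by
      conv_lhs => rw [← hσv₀]
      exact σ.inner_map_map u v₀
    rw [this, sub_self]
  -- telescoping
  have tele : ∀ i, σ (∑ j ∈ Finset.range i, (L ^ j) v)
      - ∑ j ∈ Finset.range i, (L ^ j) v = (L ^ i) v - v := by
    intro i
    induction i with
    | zero => simp
    | succ n ih =>
      have hsig : σ (∑ j ∈ Finset.range n, (L ^ j) v)
          = (∑ j ∈ Finset.range n, (L ^ j) v) + ((L ^ n) v - v) := by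
        rw [← ih]; abel
      rw [Finset.sum_range_succ, map_add, hsig, hpow n]
      abel
  set w : V := (r : ℝ)⁻¹ • ∑ i ∈ Finset.range r, ∑ j ∈ Finset.range i, (L ^ j) v with hw
  have h_w : σ w + v - w = v₀ := by
    have hsw : σ w - w = v₀ - v := by
      rw [hw, map_smul, map_sum, ← smul_sub, ← Finset.sum_sub_distrib]
      have hsum : ∑ i ∈ Finset.range r,
          (σ (∑ j ∈ Finset.range i, (L ^ j) v) - ∑ j ∈ Finset.range i, (L ^ j) v)
          = (∑ i ∈ Finset.range r, (L ^ i) v) - r • v := by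
        calc ∑ i ∈ Finset.range r,
            (σ (∑ j ∈ Finset.range i, (L ^ j) v) - ∑ j ∈ Finset.range i, (L ^ j) v)
            = ∑ i ∈ Finset.range r, ((L ^ i) v - v) :=
              Finset.sum_congr rfl fun i _ => tele i
          _ = (∑ i ∈ Finset.range r, (L ^ i) v) - r • v := by
              rw [Finset.sum_sub_distrib, Finset.sum_const, Finset.card_range]
      rw [hsum, smul_sub, ← hv₀]
      congr 1
      rw [← Nat.cast_smul_eq_nsmul ℝ, smul_smul, inv_mul_cancel₀ hrR, one_smul]
    calc σ w + v - w = (σ w - w) + v := by abel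
      _ = (v₀ - v) + v := by rw [hsw]
      _ = v₀ := by abel
  -- key quadratic identity
  have key : ∀ y : V, ‖σ y + v - y‖ ^ 2
      = ‖σ (y - w) - (y - w)‖ ^ 2 + ‖v₀‖ ^ 2 := by
    intro y
    have hdecomp : σ y + v - y = (σ (y - w) - (y - w)) + v₀ := by
      rw [map_sub, ← h_w]
      abel
    rw [hdecomp, norm_add_sq_real, horth (y - w)]
    ring
  -- lower bound
  have lower : ∀ y : V, ‖v₀‖ ≤ dist y (σ y + v) := by
    intro y
    rw [dist_eq_norm, norm_sub_rev]
    nlinarith [key y, norm_nonneg (σ y + v - y), norm_nonneg v₀,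
      sq_nonneg (‖σ (y - w) - (y - w)‖)]
  have hbdd : BddBelow (Set.range fun y : V => dist y (σ y + v)) := by
    refine ⟨0, ?_⟩
    rintro _ ⟨y, rfl⟩
    exact dist_nonneg
  have hdw : dist w (σ w + v) = ‖v₀‖ := by
    rw [dist_eq_norm, norm_sub_rev, h_w]
  have hinf : (⨅ y : V, dist y (σ y + v)) = ‖v₀‖ := by
    apply le_antisymm
    · exact hdw ▸ ciInf_le hbdd w
    · exact le_ciInf lower
  refine ⟨hinf, ?_⟩
  intro x hx
  simp only [Set.mem_setOf_eq] at hx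
  rw [hinf] at hx
  have hx' : ‖σ x + v - x‖ = ‖v₀‖ := by
    rwa [dist_eq_norm, norm_sub_rev] at hx
  have hz : ‖σ (x - w) - (x - w)‖ ^ 2 = 0 := by
    have := key x
    rw [hx'] at this
    linarith
  have hz0 : σ (x - w) - (x - w) = 0 := by
    have hn : ‖σ (x - w) - (x - w)‖ = 0 := by
      nlinarith [norm_nonneg (σ (x - w) - (x - w))]
    exact norm_eq_zero.mp hn
  have hdecomp : σ x + v - x = (σ (x - w) - (x - w)) + v₀ := by
    rw [map_sub, ← h_w]; abel
  rw [hdecomp, hz0, zero_add]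
end

section
/- Let V be a real vector space, let s ≥ 1 be an integer, let G : V → V be a linear map with G^s = id, let w, u ∈ V, and define the affine map F : V → V by F x = G x + w. Set ν = (1/s) · Σ_{i=0}^{s−1} G^i(u) and Z = Σ_{i=0}^{s−1} ((s − 1 − 2i)/(2s)) · G^i(u). Then the translation x ↦ x + Z maps the set { x ∈ V : F x = x + u } bijectively onto the set { x ∈ V : F x = x + ν }. -/
/-- Let `G` be a linear endomorphism of a real vector space with `G ^ s = 1`
(`s ≥ 1`), `w, u ∈ V`, and `F x = G x + w`.  With
`ν = (1/s) • ∑_{i<s} G^i u` and `Z = ∑_{i<s} ((s - 1 - 2i)/(2s)) • G^i u`,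
the translation `x ↦ x + Z` maps `{x | F x = x + u}` bijectively onto
`{x | F x = x + ν}`. -/
theorem translation_bijOn_fixed_sets
    {V : Type*} [AddCommGroup V] [Module ℝ V]
    (s : ℕ) (hs : 1 ≤ s) (G : V →ₗ[ℝ] V) (hG : G ^ s = 1) (w u : V)
    (ν Z : V)
    (hν : ν = (s : ℝ)⁻¹ • ∑ i ∈ Finset.range s, (G ^ i) u)
    (hZ : Z = ∑ i ∈ Finset.range s,
      (((s : ℝ) - 1 - 2 * (i : ℝ)) / (2 * (s : ℝ))) • (G ^ i) u) :
    Set.BijOn (fun x => x + Z) {x : V | G x + w = x + u}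
      {x : V | G x + w = x + ν} := by
  have hs0 : (s : ℝ) ≠ 0 := Nat.cast_ne_zero.mpr (by omega)
  set d : ℕ → ℝ := fun i => ((s : ℝ) + 1 - 2 * (i : ℝ)) / (2 * (s : ℝ)) with hd
  have hT : (G ^ s) u = u := by rw [hG]; rfl
  have hGZ : G Z = ∑ i ∈ Finset.range s, d (i + 1) • (G ^ (i + 1)) u := by
    rw [hZ, map_sum]
    refine Finset.sum_congr rfl fun i _ => ?_
    rw [map_smul]
    congr 1
    · simp only [hd]
      push_cast
      ring
    · rw [pow_succ']
      rfl
  have hZν : Z + ν = ∑ i ∈ Finset.range s, d i • (G ^ i) u := by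
    rw [hZ, hν, Finset.smul_sum, ← Finset.sum_add_distrib]
    refine Finset.sum_congr rfl fun i _ => ?_
    rw [← add_smul]
    congr 1
    simp only [hd]
    field_simp
    ring
  have key : G Z + u = Z + ν := by
    have h1 : ∑ i ∈ Finset.range s, d (i + 1) • (G ^ (i + 1)) u
        = (∑ i ∈ Finset.range s, d i • (G ^ i) u) + d s • (G ^ s) u
          - d 0 • (G ^ 0) u := by
      rw [← Finset.sum_range_succ (fun i => d i • (G ^ i) u) s,
        Finset.sum_range_succ' (fun i => d i • (G ^ i) u) s]
      abel
    have hcoef : d s - d 0 + 1 = 0 := by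
      simp only [hd]
      push_cast
      field_simp
      ring
    rw [hGZ, h1, hZν, hT]
    simp only [pow_zero, Module.End.one_apply]
    have h2 : d s • u - d 0 • u + u = (d s - d 0 + 1) • u := by
      rw [add_smul, sub_smul, one_smul]
    calc (∑ i ∈ Finset.range s, d i • (G ^ i) u) + d s • u - d 0 • u + u
        = (∑ i ∈ Finset.range s, d i • (G ^ i) u)
          + (d s • u - d 0 • u + u) := by abel
      _ = (∑ i ∈ Finset.range s, d i • (G ^ i) u) := by
          rw [h2, hcoef, zero_smul, add_zero]
  refine ⟨fun x hx => ?_, fun x _ y _ h => by simpa using h, fun y hy => ?_⟩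
  · simp only [Set.mem_setOf_eq] at hx ⊢
    rw [map_add]
    calc G x + G Z + w = (G x + w) + G Z := by abel
      _ = (x + u) + G Z := by rw [hx]
      _ = x + (G Z + u) := by abel
      _ = x + (Z + ν) := by rw [key]
      _ = x + Z + ν := by abel
  · simp only [Set.mem_setOf_eq] at hy
    refine ⟨y - Z, ?_, by simp⟩
    simp only [Set.mem_setOf_eq, map_sub]
    calc G y - G Z + w = (G y + w) - G Z := by abel
      _ = (y + ν) - G Z := by rw [hy]
      _ = (y - Z + u) + ((Z + ν) - (G Z + u)) := by abel
      _ = y - Z + u := by rw [← key, sub_self, add_zero]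
end
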